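/- For every j ∈ {1, 2, 3} (indices modulo 3): D³φ_M^4[t_{j−1}, t_{j−1}, t_{j+1}] = 2/(|e_{j+1}| |e_{j−1}|²); and for i ∈ {1, 2, 3}, D³φ_M^i[t_{j−1}, t_{j−1}, t_{j+1}] equals −2/(|e_{j+1}| |e_{j−1}|²) if i = j+1, equals 0 if i = j, and equals 2/(|e_{j+1}| |e_{j−1}|²) if i = j−1. -/

import Mathlib

noncomputable section
open MeasureTheory

namespace PaperStmt

/-- Euclidean dot product on `ℝ²`. -/
def dotp (v w : ℝ × ℝ) : ℝ := v.1 * w.1 + v.2 * w.2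

/-- Euclidean length on `ℝ²`. -/
def len (v : ℝ × ℝ) : ℝ := Real.sqrt (v.1 ^ 2 + v.2 ^ 2)

/-- Cross product (determinant) of two planar vectors. -/
def crossp (v w : ℝ × ℝ) : ℝ := v.1 * w.2 - v.2 * w.1

/-- The vertices `p 0, p 1, p 2` form a nondegenerate triangle listed counterclockwise. -/
def Ccw (p : Fin 3 → ℝ × ℝ) : Prop := 0 < crossp (p 1 - p 0) (p 2 - p 0)

/-- Vector of the edge `e_i` opposite vertex `p i`, oriented counterclockwise
(from `p (i+1)` to `p (i−1)`). -/
def edgeVec (p : Fin 3 → ℝ × ℝ) (i : Fin 3) : ℝ × ℝ := p (i - 1) - p (i + 1)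

/-- Length `|e_i|` of the edge opposite vertex `p i`. -/
def elen (p : Fin 3 → ℝ × ℝ) (i : Fin 3) : ℝ := len (edgeVec p i)

/-- Unit tangent `t_i = (p_{i−1} − p_{i+1})/|e_i|` of edge `e_i`. -/
def tvec (p : Fin 3 → ℝ × ℝ) (i : Fin 3) : ℝ × ℝ := (elen p i)⁻¹ • edgeVec p i

/-- Outward unit normal `n_i` of edge `e_i` (clockwise rotation of the tangent,
which points outward for a counterclockwise triangle). -/
def nvec (p : Fin 3 → ℝ × ℝ) (i : Fin 3) : ℝ × ℝ := ((tvec p i).2, -(tvec p i).1)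

/-- Interior angle `θ_i` of the triangle at the vertex `p i`. -/
def angleAt (p : Fin 3 → ℝ × ℝ) (i : Fin 3) : ℝ :=
  Real.arccos (dotp (p (i + 1) - p i) (p (i - 1) - p i) /
    (len (p (i + 1) - p i) * len (p (i - 1) - p i)))

/-- Outer product `v wᵀ` of two planar (column) vectors, as a `2 × 2` matrix. -/
def outerProd (v w : ℝ × ℝ) : Matrix (Fin 2) (Fin 2) ℝ :=
  !![v.1 * w.1, v.1 * w.2; v.2 * w.1, v.2 * w.2]

/-- Basis matrices `φ_HHJ^i = −(1/(2 sin θ_{i−1} sin θ_{i+1})) (t_{i−1} t_{i+1}ᵀ + t_{i+1} t_{i−1}ᵀ)`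
of the lowest-order Hellan–Herrmann–Johnson element. -/
def phiHHJ (p : Fin 3 → ℝ × ℝ) (i : Fin 3) : Matrix (Fin 2) (Fin 2) ℝ :=
  (-(2 * Real.sin (angleAt p (i - 1)) * Real.sin (angleAt p (i + 1)))⁻¹) •
    (outerProd (tvec p (i - 1)) (tvec p (i + 1)) + outerProd (tvec p (i + 1)) (tvec p (i - 1)))

/-- The quadratic form `vᵀ τ v` of a `2 × 2` matrix on a planar vector. -/
def qf (τ : Matrix (Fin 2) (Fin 2) ℝ) (v : ℝ × ℝ) : ℝ :=
  v.1 * (τ 0 0 * v.1 + τ 0 1 * v.2) + v.2 * (τ 1 0 * v.1 + τ 1 1 * v.2)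

end PaperStmt

namespace PaperStmt

/-- Directional derivative of `f` along `v`. -/
def dderiv (v : ℝ × ℝ) (f : ℝ × ℝ → ℝ) : ℝ × ℝ → ℝ := fun x => fderiv ℝ f x v

/-- Second directional derivative `D²f[u, v]`. -/
def d2 (u v : ℝ × ℝ) (f : ℝ × ℝ → ℝ) : ℝ × ℝ → ℝ := dderiv u (dderiv v f)

/-- Third directional derivative `D³f[u, v, w]`. -/
def d3 (u v w : ℝ × ℝ) (f : ℝ × ℝ → ℝ) : ℝ × ℝ → ℝ := dderiv u (dderiv v (dderiv w f))

/-- `ψ` is the family of barycentric coordinates of the triangle with vertices `p`: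
affine functions with `ψ i (p j) = δ_{ij}`. -/
def IsBarycentric (p : Fin 3 → ℝ × ℝ) (ψ : Fin 3 → ℝ × ℝ → ℝ) : Prop :=
  (∀ i : Fin 3, ∃ a b c : ℝ, ∀ x : ℝ × ℝ, ψ i x = a * x.1 + b * x.2 + c) ∧
  (∀ i j : Fin 3, ψ i (p j) = if i = j then 1 else 0)

/-- Morley bubble `φ_M^i = ψ_{i−1}² ψ_{i+1}` for `i = 1, 2, 3`. -/
def phiM3 (ψ : Fin 3 → ℝ × ℝ → ℝ) (i : Fin 3) : ℝ × ℝ → ℝ :=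
  fun x => (ψ (i - 1) x) ^ 2 * ψ (i + 1) x

/-- Morley bubble `φ_M^4 = ψ₁ ψ₂ ψ₃`. -/
def phiM4 (ψ : Fin 3 → ℝ × ℝ → ℝ) : ℝ × ℝ → ℝ :=
  fun x => ψ 0 x * ψ 1 x * ψ 2 x

/-- The four Morley bubbles `φ_M^1, φ_M^2, φ_M^3, φ_M^4`. -/
def phiM (ψ : Fin 3 → ℝ × ℝ → ℝ) : Fin 4 → ℝ × ℝ → ℝ :=
  ![phiM3 ψ 0, phiM3 ψ 1, phiM3 ψ 2, phiM4 ψ]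

end PaperStmt


namespace MyAux

def lm (a b : ℝ) : ℝ × ℝ →L[ℝ] ℝ :=
  a • ContinuousLinearMap.fst ℝ ℝ ℝ + b • ContinuousLinearMap.snd ℝ ℝ ℝ

@[simp] lemma lm_apply (a b : ℝ) (v : ℝ × ℝ) : lm a b v = a * v.1 + b * v.2 := by
  simp [lm]

lemma hasF (a b c : ℝ) (x : ℝ × ℝ) :
    HasFDerivAt (fun y : ℝ × ℝ => a * y.1 + b * y.2 + c) (lm a b) x := by
  have h1 : HasFDerivAt (fun y : ℝ × ℝ => y.1) (ContinuousLinearMap.fst ℝ ℝ ℝ) x :=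
    hasFDerivAt_fst
  have h2 : HasFDerivAt (fun y : ℝ × ℝ => y.2) (ContinuousLinearMap.snd ℝ ℝ ℝ) x :=
    hasFDerivAt_snd
  exact ((h1.const_mul a).add (h2.const_mul b)).add_const c

lemma stepW (a1 b1 c1 a2 b2 c2 a3 b3 c3 : ℝ) (w : ℝ × ℝ) :
    (fun x : ℝ × ℝ => fderiv ℝ
      (fun y : ℝ × ℝ => (a1*y.1+b1*y.2+c1)*(a2*y.1+b2*y.2+c2)*(a3*y.1+b3*y.2+c3)) x w)
    = fun x : ℝ × ℝ =>
      (a1*x.1+b1*x.2+c1)*((a2*x.1+b2*x.2+c2)*(a3*w.1+b3*w.2)+(a3*x.1+b3*x.2+c3)*(a2*w.1+b2*w.2))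
      + (a2*x.1+b2*x.2+c2)*((a3*x.1+b3*x.2+c3)*(a1*w.1+b1*w.2)) := by
  funext x
  erw [(((hasF a1 b1 c1 x).mul (hasF a2 b2 c2 x)).mul (hasF a3 b3 c3 x)).fderiv]
  simp
  ring

lemma stepV2 (a1 b1 c1 a2 b2 c2 a3 b3 c3 K K' K'' : ℝ) (v : ℝ × ℝ) :
    (fun x : ℝ × ℝ => fderiv ℝ
      (fun y : ℝ × ℝ => (a1*y.1+b1*y.2+c1)*((a2*y.1+b2*y.2+c2)*K+(a3*y.1+b3*y.2+c3)*K')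
        + (a2*y.1+b2*y.2+c2)*((a3*y.1+b3*y.2+c3)*K'')) x v)
    = fun x : ℝ × ℝ =>
      (a1*x.1+b1*x.2+c1)*((a2*v.1+b2*v.2)*K+(a3*v.1+b3*v.2)*K')
      + (a2*x.1+b2*x.2+c2)*((a1*v.1+b1*v.2)*K+(a3*v.1+b3*v.2)*K'')
      + (a3*x.1+b3*x.2+c3)*((a1*v.1+b1*v.2)*K'+(a2*v.1+b2*v.2)*K'') := by
  funext x
  erw [(((hasF a1 b1 c1 x).mul (((hasF a2 b2 c2 x).mul_const K).add
      ((hasF a3 b3 c3 x).mul_const K'))).add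
      ((hasF a2 b2 c2 x).mul ((hasF a3 b3 c3 x).mul_const K''))).fderiv]
  simp
  ring

lemma stepU (a1 b1 c1 a2 b2 c2 a3 b3 c3 K1 K2 K3 : ℝ) (u x : ℝ × ℝ) :
    fderiv ℝ
      (fun y : ℝ × ℝ => (a1*y.1+b1*y.2+c1)*K1 + (a2*y.1+b2*y.2+c2)*K2 + (a3*y.1+b3*y.2+c3)*K3) x u
    = (a1*u.1+b1*u.2)*K1 + (a2*u.1+b2*u.2)*K2 + (a3*u.1+b3*u.2)*K3 := by
  erw [((((hasF a1 b1 c1 x).mul_const K1).add ((hasF a2 b2 c2 x).mul_const K2)).add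
      ((hasF a3 b3 c3 x).mul_const K3)).fderiv]
  simp
  ring

lemma d3_aff3 (a1 b1 c1 a2 b2 c2 a3 b3 c3 : ℝ) (u v w x : ℝ × ℝ) :
    PaperStmt.d3 u v w
      (fun y : ℝ × ℝ => (a1*y.1+b1*y.2+c1)*(a2*y.1+b2*y.2+c2)*(a3*y.1+b3*y.2+c3)) x =
    (a1*u.1+b1*u.2)*((a2*v.1+b2*v.2)*(a3*w.1+b3*w.2)+(a3*v.1+b3*v.2)*(a2*w.1+b2*w.2))
    + (a2*u.1+b2*u.2)*((a1*v.1+b1*v.2)*(a3*w.1+b3*w.2)+(a3*v.1+b3*v.2)*(a1*w.1+b1*w.2))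
    + (a3*u.1+b3*u.2)*((a1*v.1+b1*v.2)*(a2*w.1+b2*w.2)+(a2*v.1+b2*v.2)*(a1*w.1+b1*w.2)) := by
  have hdd : ∀ (v : ℝ × ℝ) (f : ℝ × ℝ → ℝ), PaperStmt.dderiv v f = fun x => fderiv ℝ f x v :=
    fun _ _ => rfl
  simp only [PaperStmt.d3, hdd]
  rw [stepW a1 b1 c1 a2 b2 c2 a3 b3 c3 w,
      stepV2 a1 b1 c1 a2 b2 c2 a3 b3 c3 (a3*w.1+b3*w.2) (a2*w.1+b2*w.2) (a1*w.1+b1*w.2) v,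
      stepU]

end MyAux

open PaperStmt in
/-- Mixed third directional derivatives of the Morley bubbles:
`D³φ_M^4[t_{j−1}, t_{j−1}, t_{j+1}] = 2/(|e_{j+1}| |e_{j−1}|²)`, and for `i = 1, 2, 3`,
`D³φ_M^i[t_{j−1}, t_{j−1}, t_{j+1}]` equals `−2/(|e_{j+1}| |e_{j−1}|²)` if `i = j+1`,
`0` if `i = j`, and `2/(|e_{j+1}| |e_{j−1}|²)` if `i = j−1`. -/
theorem morley_bubble_third_deriv_mixed
    (p : Fin 3 → ℝ × ℝ) (hp : Ccw p)
    (ψ : Fin 3 → ℝ × ℝ → ℝ) (hψ : IsBarycentric p ψ)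
    (j : Fin 3) :
    (∀ x : ℝ × ℝ,
      d3 (tvec p (j - 1)) (tvec p (j - 1)) (tvec p (j + 1)) (phiM4 ψ) x =
        2 / (elen p (j + 1) * elen p (j - 1) ^ 2)) ∧
    (∀ i : Fin 3, ∀ x : ℝ × ℝ,
      d3 (tvec p (j - 1)) (tvec p (j - 1)) (tvec p (j + 1)) (phiM3 ψ i) x =
        if i = j + 1 then -2 / (elen p (j + 1) * elen p (j - 1) ^ 2)
        else if i = j then 0
        else 2 / (elen p (j + 1) * elen p (j - 1) ^ 2)) := by
  obtain ⟨haff, hval⟩ := hψ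
  choose a b c hrep using haff
  have hcase : ∀ m : Fin 3, m = 0 ∨ m = 1 ∨ m = 2 := by decide
  have hne : ∀ k : Fin 3, edgeVec p k ≠ 0 := by
    intro k hk
    have hk' : p (k - 1) = p (k + 1) := sub_eq_zero.mp hk
    have hp' := hp
    simp only [Ccw, crossp] at hp'
    rcases hcase k with rfl | rfl | rfl
    · rw [show ((0:Fin 3) - 1) = 2 by decide, show ((0:Fin 3) + 1) = 1 by decide] at hk'
      rw [hk'] at hp'
      linarith [mul_comm (p 1 - p 0).1 (p 1 - p 0).2]
    · rw [show ((1:Fin 3) - 1) = 0 by decide, show ((1:Fin 3) + 1) = 2 by decide] at hk'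
      rw [← hk'] at hp'
      simp [Prod.fst_sub, Prod.snd_sub, sub_self] at hp'
    · rw [show ((2:Fin 3) - 1) = 1 by decide, show ((2:Fin 3) + 1) = 0 by decide] at hk'
      rw [hk'] at hp'
      simp [Prod.fst_sub, Prod.snd_sub, sub_self] at hp'
  have hlen : ∀ k : Fin 3, 0 < elen p k := by
    intro k
    have hor : (edgeVec p k).1 ≠ 0 ∨ (edgeVec p k).2 ≠ 0 := by
      by_contra hcon
      push_neg at hcon
      exact hne k (Prod.ext_iff.mpr ⟨by simp [hcon.1], by simp [hcon.2]⟩)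
    unfold elen len
    apply Real.sqrt_pos.mpr
    rcases hor with h | h <;> positivity
  have hG : ∀ i k : Fin 3, a i * (tvec p k).1 + b i * (tvec p k).2 =
      (elen p k)⁻¹ * ((if i = k - 1 then 1 else 0) - (if i = k + 1 then 1 else 0)) := by
    intro i k
    have h1 : (tvec p k).1 = (elen p k)⁻¹ * ((p (k - 1)).1 - (p (k + 1)).1) := by
      simp [tvec, edgeVec]
    have h2 : (tvec p k).2 = (elen p k)⁻¹ * ((p (k - 1)).2 - (p (k + 1)).2) := by
      simp [tvec, edgeVec]
    have w1 : a i * (p (k - 1)).1 + b i * (p (k - 1)).2 + c i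
        = (if i = k - 1 then (1:ℝ) else 0) := by
      rw [← hrep i (p (k - 1))]; exact hval i (k - 1)
    have w2 : a i * (p (k + 1)).1 + b i * (p (k + 1)).2 + c i
        = (if i = k + 1 then (1:ℝ) else 0) := by
      rw [← hrep i (p (k + 1))]; exact hval i (k + 1)
    rw [h1, h2]
    calc a i * ((elen p k)⁻¹ * ((p (k - 1)).1 - (p (k + 1)).1))
          + b i * ((elen p k)⁻¹ * ((p (k - 1)).2 - (p (k + 1)).2))
        = (elen p k)⁻¹ * ((a i * (p (k - 1)).1 + b i * (p (k - 1)).2 + c i)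
            - (a i * (p (k + 1)).1 + b i * (p (k + 1)).2 + c i)) := by ring
      _ = (elen p k)⁻¹ * ((if i = k - 1 then 1 else 0) - (if i = k + 1 then 1 else 0)) := by
          rw [w1, w2]
  have e0 := (hlen 0).ne'
  have e1 := (hlen 1).ne'
  have e2 := (hlen 2).ne'
  constructor
  · intro x
    have hfun : phiM4 ψ = fun y : ℝ × ℝ =>
        (a 0 * y.1 + b 0 * y.2 + c 0) * (a 1 * y.1 + b 1 * y.2 + c 1)
          * (a 2 * y.1 + b 2 * y.2 + c 2) := by
      funext y; simp [phiM4, hrep]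
    rw [hfun, MyAux.d3_aff3]
    simp only [hG]
    rcases hcase j with rfl | rfl | rfl <;>
      · simp only [show ((0:Fin 3) - 1) = 2 by decide,
          show ((0:Fin 3) + 1) = 1 by decide, show ((1:Fin 3) - 1) = 0 by decide,
          show ((1:Fin 3) + 1) = 2 by decide, show ((2:Fin 3) - 1) = 1 by decide,
          show ((2:Fin 3) + 1) = 0 by decide]
        norm_num [show ¬((0:Fin 3) = 1) by decide, show ¬((0:Fin 3) = 2) by decide,
          show ¬((1:Fin 3) = 0) by decide, show ¬((1:Fin 3) = 2) by decide,
          show ¬((2:Fin 3) = 0) by decide, show ¬((2:Fin 3) = 1) by decide]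
        try field_simp
        try ring
  · intro i x
    have hfun : phiM3 ψ i = fun y : ℝ × ℝ =>
        (a (i - 1) * y.1 + b (i - 1) * y.2 + c (i - 1))
          * (a (i - 1) * y.1 + b (i - 1) * y.2 + c (i - 1))
          * (a (i + 1) * y.1 + b (i + 1) * y.2 + c (i + 1)) := by
      funext y; simp [phiM3, hrep, pow_two]
    rw [hfun, MyAux.d3_aff3]
    simp only [hG]
    rcases hcase i with rfl | rfl | rfl <;> rcases hcase j with rfl | rfl | rfl <;>
      · simp only [show ((0:Fin 3) - 1) = 2 by decide,
          show ((0:Fin 3) + 1) = 1 by decide, show ((1:Fin 3) - 1) = 0 by decide,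
          show ((1:Fin 3) + 1) = 2 by decide, show ((2:Fin 3) - 1) = 1 by decide,
          show ((2:Fin 3) + 1) = 0 by decide]
        norm_num [show ¬((0:Fin 3) = 1) by decide, show ¬((0:Fin 3) = 2) by decide,
          show ¬((1:Fin 3) = 0) by decide, show ¬((1:Fin 3) = 2) by decide,
          show ¬((2:Fin 3) = 0) by decide, show ¬((2:Fin 3) = 1) by decide]
        try field_simp
        try ring
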